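/- Successive tiling: under the coding scheme G_i(k+i−1, k), let λ = (λ_1,…,λ_k) be nonnegative, let A = {j ∈ [i] : λ_j ≥ 1}, B = [i] \ A, C = {i+1,…,k}, and a = |A|. If k·Σ_{j∈A}(λ_j − 1) + k·Σ_{j∈C} λ_j + Σ_{j∈B} λ_j ≤ k + i − 1 − a, Σ_{j=1}^k λ_j = i, and Σ_{j∈A}(λ_j − 1) + Σ_{j∈C} λ_j ≤ 1, then λ is achievable, i.e., λ ∈ S_i(k+i−1, k). -/

import Mathlib

open Matrix

/-- `R ⊆ [n]` is a recovery set for object `j` under generator matrix `G`: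
the standard basis vector `e_j` lies in the span of the columns of `G` indexed by `R`,
and minimally so. -/
def IsRecoverySet {F : Type*} [Field F] {k n : ℕ} (G : Matrix (Fin k) (Fin n) F)
    (j : Fin k) (R : Finset (Fin n)) : Prop :=
  (Pi.single j 1 : Fin k → F) ∈ Submodule.span F (Gᵀ '' (R : Set (Fin n))) ∧
    ∀ S : Finset (Fin n), S ⊂ R →
      (Pi.single j 1 : Fin k → F) ∉ Submodule.span F (Gᵀ '' (S : Set (Fin n)))

/-- A valid allocation of request rates `lam` to recovery sets: nonnegative weights
`w j R` supported on recovery sets, summing to `lam j` for each object `j`, and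
loading each server `l` by at most its unit capacity. -/
def IsValidAllocation {F : Type*} [Field F] {k n : ℕ} (G : Matrix (Fin k) (Fin n) F)
    (lam : Fin k → ℝ) (w : Fin k → Finset (Fin n) → ℝ) : Prop :=
  (∀ j R, 0 ≤ w j R) ∧
  (∀ j R, ¬ IsRecoverySet G j R → w j R = 0) ∧
  (∀ j, ∑ R : Finset (Fin n), w j R = lam j) ∧
  (∀ l : Fin n, ∑ j : Fin k, ∑ R ∈ Finset.univ.filter (fun R : Finset (Fin n) => l ∈ R),
      w j R ≤ 1)

/-- The service rate region of `G`. -/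
def ServiceRegion {F : Type*} [Field F] {k n : ℕ} (G : Matrix (Fin k) (Fin n) F) :
    Set (Fin k → ℝ) :=
  {lam | (∀ j, 0 ≤ lam j) ∧ ∃ w, IsValidAllocation G lam w}

/-- `Gmat M i` = the `k × n` matrix formed by the `i` leftmost (systematic) columns of `M`
followed by the `n - i` rightmost (parity) columns of `M`. -/
def Gmat {F : Type*} [Field F] {k n : ℕ} (M : Matrix (Fin k) (Fin (k + n)) F) (i : ℕ) :
    Matrix (Fin k) (Fin n) F :=
  Matrix.of fun r l =>
    if (l : ℕ) < i then M r ⟨(l : ℕ), by have := l.isLt; omega⟩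
    else M r ⟨k + (l : ℕ), by have := l.isLt; omega⟩


lemma card_filter_val_lt' {N : ℕ} (t : ℕ) (h : t ≤ N) :
    ((Finset.univ : Finset (Fin N)).filter (fun l : Fin N => (l : ℕ) < t)).card = t := by
  have : (Finset.univ : Finset (Fin N)).filter (fun l : Fin N => (l : ℕ) < t) =
      (Finset.univ : Finset (Fin t)).map (Fin.castLEEmb h) := by
    ext l
    simp only [Finset.mem_filter, Finset.mem_univ, true_and, Finset.mem_map]
    constructor
    · intro hl
      exact ⟨⟨(l : ℕ), hl⟩, rfl⟩
    · rintro ⟨a, rfl⟩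
      simp only [Fin.castLEEmb_apply, Fin.coe_castLE]
      exact a.isLt
  rw [this]
  simp

lemma isRecoverySet_singleton' {F : Type*} [Field F] {k n : ℕ}
    (G : Matrix (Fin k) (Fin n) F) (j : Fin k) (t : Fin n)
    (h : Gᵀ t = Pi.single j 1) : IsRecoverySet G j {t} := by
  constructor
  · exact Submodule.subset_span ⟨t, by simp, h⟩
  · intro S hS
    rw [Finset.eq_empty_of_ssubset_singleton hS]
    simp only [Finset.coe_empty, Set.image_empty, Submodule.span_empty, Submodule.mem_bot]
    intro hmem
    have h0 : Gᵀ '' (∅ : Set (Fin n)) = ∅ := Set.image_empty _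
    rw [h0, Submodule.span_empty, Submodule.mem_bot] at hmem
    have := congrFun hmem j
    simp [Pi.single_eq_same] at this

lemma isRecoverySet_big' {F : Type*} [Field F] {k m : ℕ} (hk : 0 < k)
    (M : Matrix (Fin k) (Fin (k + m)) F)
    (hMDS : ∀ S : Finset (Fin (k + m)), S.card = k →
      LinearIndependent F (fun l : S => Mᵀ (l : Fin (k + m))))
    (G : Matrix (Fin k) (Fin m) F) (φ : Fin m → Fin (k + m))
    (hφ : Function.Injective φ) (hG : Gᵀ = Mᵀ ∘ φ)
    (j : Fin k) (hej : Mᵀ (Fin.castAdd m j) = Pi.single j 1)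
    (R : Finset (Fin m)) (hcard : R.card = k)
    (hjR : ∀ l ∈ R, φ l ≠ Fin.castAdd m j) :
    IsRecoverySet G j R := by
  constructor
  · set T : Finset (Fin (k + m)) := R.image φ with hT
    have hTcard : T.card = k := by rw [hT, Finset.card_image_of_injective _ hφ, hcard]
    have hli := hMDS T hTcard
    have hne : Nonempty T :=
      Finset.Nonempty.to_subtype (Finset.card_pos.mp (by omega))
    have hspan : Submodule.span F (Set.range (fun l : T => Mᵀ (l : Fin (k + m)))) = ⊤ := by
      apply hli.span_eq_top_of_card_eq_finrank
      simp [hTcard, Module.finrank_fintype_fun_eq_card]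
    have hrange : Set.range (fun l : T => Mᵀ (l : Fin (k + m))) = Mᵀ '' (T : Set (Fin (k + m))) := by
      exact (Set.image_eq_range _ _).symm
    have himg : Gᵀ '' (R : Set (Fin m)) = Mᵀ '' (T : Set (Fin (k + m))) := by
      rw [hG, hT, Finset.coe_image]
      exact Set.image_comp _ _ _
    rw [himg, ← hrange, hspan]
    trivial
  · intro S hS hmem
    have hScard : S.card < k := by
      have := Finset.card_lt_card hS
      omega
    set T : Finset (Fin (k + m)) := insert (Fin.castAdd m j) (S.image φ) with hT
    have hTcard : T.card ≤ k := by
      calc T.card ≤ (S.image φ).card + 1 := Finset.card_insert_le _ _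
        _ ≤ S.card + 1 := by have := Finset.card_image_le (f := φ) (s := S); omega
        _ ≤ k := by omega
    obtain ⟨U, hTU, -, hUcard⟩ :=
      Finset.exists_subsuperset_card_eq (Finset.subset_univ T) hTcard
        (by simp only [Finset.card_univ, Fintype.card_fin]; omega)
    have hli := hMDS U hUcard
    have hxU : Fin.castAdd m j ∈ U := hTU (Finset.mem_insert_self _ _)
    set x : U := ⟨Fin.castAdd m j, hxU⟩ with hx
    set s : Set U := {u : U | (u : Fin (k + m)) ∈ S.image φ} with hs
    have hxs : x ∉ s := by
      intro hmemx
      simp only [hs, Set.mem_setOf_eq, Finset.mem_image] at hmemx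
      obtain ⟨l, hlS, hl⟩ := hmemx
      exact hjR l (hS.subset hlS) hl
    have hnot := LinearIndependent.notMem_span_image hli (s := s) hxs
    apply hnot
    have himg : (fun l : U => Mᵀ (l : Fin (k + m))) '' s
        = Mᵀ '' ((S.image φ : Finset (Fin (k+m))) : Set (Fin (k + m))) := by
      ext y
      constructor
      · rintro ⟨u, hu, rfl⟩
        exact ⟨u, hu, rfl⟩
      · rintro ⟨v, hv, rfl⟩
        have hvU : v ∈ U := hTU (Finset.mem_insert_of_mem hv)
        exact ⟨⟨v, hvU⟩, hv, rfl⟩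
    rw [himg]
    have hSimg : Gᵀ '' (S : Set (Fin m))
        = Mᵀ '' ((S.image φ : Finset (Fin (k+m))) : Set (Fin (k + m))) := by
      rw [hG, Finset.coe_image]
      exact Set.image_comp _ _ _
    rw [← hSimg]
    rw [show Mᵀ ((x : Fin (k + m))) = Pi.single j 1 from hej]
    exact hmem

theorem successive_tiling
    {F : Type*} [Field F] [Fintype F] {k i : ℕ} (hk : 2 ≤ k) (hi : 1 ≤ i) (hik : i ≤ k)
    (hq : k + (k + i - 1) + 1 ≤ Fintype.card F)
    (M : Matrix (Fin k) (Fin (k + (k + i - 1))) F)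
    (hsys : ∀ j : Fin k, ∀ r : Fin k,
      M r (Fin.castAdd (k + i - 1) j) = if r = j then (1 : F) else 0)
    (hMDS : ∀ S : Finset (Fin (k + (k + i - 1))), S.card = k →
      LinearIndependent F (fun l : S => Mᵀ (l : Fin (k + (k + i - 1)))))
    (lam : Fin k → ℝ) (hlam0 : ∀ j, 0 ≤ lam j)
    (hcap :
      (k : ℝ) * (∑ j ∈ Finset.univ.filter (fun j : Fin k => (j : ℕ) < i ∧ 1 ≤ lam j),
            (lam j - 1)) +
          (k : ℝ) * (∑ j ∈ Finset.univ.filter (fun j : Fin k => i ≤ (j : ℕ)), lam j) +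
          ∑ j ∈ Finset.univ.filter (fun j : Fin k => (j : ℕ) < i ∧ lam j < 1), lam j ≤
        (k : ℝ) + (i : ℝ) - 1 -
          ((Finset.univ.filter (fun j : Fin k => (j : ℕ) < i ∧ 1 ≤ lam j)).card : ℝ))
    (hsum : ∑ j, lam j = (i : ℝ))
    (hslack :
      (∑ j ∈ Finset.univ.filter (fun j : Fin k => (j : ℕ) < i ∧ 1 ≤ lam j), (lam j - 1)) +
          ∑ j ∈ Finset.univ.filter (fun j : Fin k => i ≤ (j : ℕ)), lam j ≤ 1) :
    lam ∈ ServiceRegion (Gmat M i : Matrix (Fin k) (Fin (k + i - 1)) F) := by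
  classical
  set Afin := Finset.univ.filter (fun j : Fin k => (j : ℕ) < i ∧ 1 ≤ lam j) with hAfin
  set Bfin := Finset.univ.filter (fun j : Fin k => (j : ℕ) < i ∧ lam j < 1) with hBfin
  set Cfin := Finset.univ.filter (fun j : Fin k => i ≤ (j : ℕ)) with hCfin
  set P := Finset.univ.filter (fun l : Fin (k + i - 1) => i ≤ (l : ℕ)) with hP
  set bcol : Fin k → Fin (k + i - 1) := fun b => ⟨(b : ℕ), by have := b.isLt; omega⟩ with hbcol
  set sfun : Fin k → ℝ := fun j => if (j : ℕ) < i then min (lam j) 1 else 0 with hsfun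
  set d : Fin k → ℝ := fun j => lam j - sfun j with hdd
  set D : ℝ := ∑ j, d j with hDD
  have hmemA : ∀ j, j ∈ Afin ↔ ((j : ℕ) < i ∧ 1 ≤ lam j) := by
    intro j; simp [hAfin]
  have hmemB : ∀ j, j ∈ Bfin ↔ ((j : ℕ) < i ∧ lam j < 1) := by
    intro j; simp [hBfin]
  have hmemC : ∀ j, j ∈ Cfin ↔ (i ≤ (j : ℕ)) := by
    intro j; simp [hCfin]
  have hmemP : ∀ l, l ∈ P ↔ (i ≤ (l : ℕ)) := by
    intro l; simp [hP]
  have hd0 : ∀ j, 0 ≤ d j := by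
    intro j
    simp only [hdd, hsfun]
    split_ifs with h
    · have : min (lam j) 1 ≤ lam j := min_le_left _ _
      linarith
    · simpa using hlam0 j
  have hD0 : 0 ≤ D := Finset.sum_nonneg fun j _ => hd0 j
  have hdD : ∀ j, d j ≤ D := fun j =>
    Finset.single_le_sum (fun j _ => hd0 j) (Finset.mem_univ j)
  have hDzero : D = 0 → ∀ j, d j = 0 := by
    intro h j
    have := hdD j
    have := hd0 j
    linarith
  -- partition facts
  have hAeq : (Finset.univ.filter (fun j : Fin k => (j : ℕ) < i)).filter (fun j => 1 ≤ lam j)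
      = Afin := by
    rw [Finset.filter_filter, hAfin]
  have hBeq : (Finset.univ.filter (fun j : Fin k => (j : ℕ) < i)).filter (fun j => ¬ 1 ≤ lam j)
      = Bfin := by
    rw [Finset.filter_filter, hBfin]
    apply Finset.filter_congr
    intro j _
    simp [not_le]
  have hCeq : Finset.univ.filter (fun j : Fin k => ¬ (j : ℕ) < i) = Cfin := by
    rw [hCfin]
    apply Finset.filter_congr
    intro j _
    simp [not_lt]
  have huniv : ∀ f : Fin k → ℝ,
      ∑ j, f j = ((∑ j ∈ Afin, f j) + ∑ j ∈ Bfin, f j) + ∑ j ∈ Cfin, f j := by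
    intro f
    rw [← hAeq, ← hBeq, ← hCeq, Finset.sum_filter_add_sum_filter_not,
      Finset.sum_filter_add_sum_filter_not]
  have hABi : Afin.card + Bfin.card = i := by
    have hs : (Finset.univ.filter (fun j : Fin k => (j : ℕ) < i)).card = i :=
      card_filter_val_lt' i hik
    have h := Finset.card_filter_add_card_filter_not
      (s := Finset.univ.filter (fun j : Fin k => (j : ℕ) < i)) (p := fun j => 1 ≤ lam j)
    rw [hAeq, hBeq, hs] at h
    exact h
  -- values on the pieces
  have hdA : ∀ j ∈ Afin, d j = lam j - 1 := by
    intro j hj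
    obtain ⟨h1, h2⟩ := (hmemA j).mp hj
    simp only [hdd, hsfun, if_pos h1, min_eq_right h2]
  have hdB : ∀ j ∈ Bfin, d j = 0 := by
    intro j hj
    obtain ⟨h1, h2⟩ := (hmemB j).mp hj
    simp only [hdd, hsfun, if_pos h1, min_eq_left h2.le]
    ring
  have hdC : ∀ j ∈ Cfin, d j = lam j := by
    intro j hj
    have h1 := (hmemC j).mp hj
    simp only [hdd, hsfun, if_neg (by omega : ¬ (j : ℕ) < i)]
    ring
  have hDval : D = (∑ j ∈ Afin, (lam j - 1)) + ∑ j ∈ Cfin, lam j := by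
    rw [hDD, huniv d, Finset.sum_congr rfl hdA, Finset.sum_congr rfl hdB,
      Finset.sum_congr rfl hdC]
    simp
  have hD1 : D ≤ 1 := by rw [hDval]; exact hslack
  have hDB : ∑ b ∈ Bfin, (1 - lam b) = D := by
    have h1 : ((∑ j ∈ Afin, lam j) + ∑ j ∈ Bfin, lam j) + ∑ j ∈ Cfin, lam j = i := by
      rw [← huniv lam]; exact hsum
    have h2 : (Afin.card : ℝ) + (Bfin.card : ℝ) = (i : ℝ) := by exact_mod_cast hABi
    have h3 : ∑ b ∈ Bfin, (1 - lam b) = (Bfin.card : ℝ) - ∑ b ∈ Bfin, lam b := by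
      rw [Finset.sum_sub_distrib, Finset.sum_const, nsmul_eq_mul, mul_one]
    have h4 : ∑ j ∈ Afin, (lam j - 1) = (∑ j ∈ Afin, lam j) - (Afin.card : ℝ) := by
      rw [Finset.sum_sub_distrib, Finset.sum_const, nsmul_eq_mul, mul_one]
    rw [h3]
    rw [hDval, h4]
    linarith
  have hrowsum : D ≠ 0 → ∀ j, ∑ b ∈ Bfin, d j * (1 - lam b) / D = d j := by
    intro hDne j
    have h : ∑ b ∈ Bfin, d j * (1 - lam b) / D = d j / D * ∑ b ∈ Bfin, (1 - lam b) := by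
      rw [Finset.mul_sum]
      apply Finset.sum_congr rfl
      intro b _
      ring
    rw [h, hDB, div_mul_cancel₀ _ hDne]
  -- recovery set machinery
  set φ : Fin (k + i - 1) → Fin (k + (k + i - 1)) := fun l =>
    if (l : ℕ) < i then ⟨(l : ℕ), by have := l.isLt; omega⟩
    else ⟨k + (l : ℕ), by have := l.isLt; omega⟩ with hφ
  have hGM : (Gmat M i : Matrix (Fin k) (Fin (k + i - 1)) F)ᵀ = Mᵀ ∘ φ := by
    funext l r
    show (Gmat M i : Matrix (Fin k) (Fin (k + i - 1)) F) r l = M r (φ l)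
    simp only [Gmat, Matrix.of_apply, hφ]
    split_ifs with h
    · rfl
    · rfl
  have hφval : ∀ l : Fin (k + i - 1),
      (φ l : ℕ) = if (l : ℕ) < i then (l : ℕ) else k + (l : ℕ) := by
    intro l
    simp only [hφ]
    split_ifs with h
    · rfl
    · rfl
  have hφinj : Function.Injective φ := by
    intro a b hab
    have h := congrArg Fin.val hab
    rw [hφval, hφval] at h
    apply Fin.ext
    split_ifs at h with h1 h2 h3 <;> omega
  have hej : ∀ j : Fin k, Mᵀ (Fin.castAdd (k + i - 1) j) = Pi.single j 1 := by
    intro j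
    funext r
    rw [transpose_apply, hsys j r, Pi.single_apply]
  have hφb : ∀ b : Fin k, (b : ℕ) < i → φ (bcol b) = Fin.castAdd (k + i - 1) b := by
    intro b hb
    apply Fin.ext
    rw [hφval]
    simp only [hbcol]
    rw [if_pos hb]
    simp
  have hPcard : P.card = k - 1 := by
    have hs : (Finset.univ.filter (fun l : Fin (k + i - 1) => (l : ℕ) < i)).card = i :=
      card_filter_val_lt' i (by omega)
    have h := Finset.card_filter_add_card_filter_not
      (s := (Finset.univ : Finset (Fin (k + i - 1)))) (p := fun l => (l : ℕ) < i)
    have hP' : Finset.univ.filter (fun l : Fin (k + i - 1) => ¬ (l : ℕ) < i) = P := by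
      rw [hP]
      apply Finset.filter_congr
      intro l _
      simp [not_lt]
    rw [hs, hP', Finset.card_univ, Fintype.card_fin] at h
    omega
  have hbP : ∀ b : Fin k, (b : ℕ) < i → bcol b ∉ P := by
    intro b hb hmem
    have := (hmemP _).mp hmem
    simp only [hbcol] at this
    omega
  have hRcard : ∀ b : Fin k, (b : ℕ) < i → (insert (bcol b) P).card = k := by
    intro b hb
    rw [Finset.card_insert_of_notMem (hbP b hb), hPcard]
    omega
  have hrecS : ∀ j : Fin k, (j : ℕ) < i →
      IsRecoverySet (Gmat M i : Matrix (Fin k) (Fin (k + i - 1)) F) j {bcol j} := by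
    intro j hj
    apply isRecoverySet_singleton'
    have h : (Gmat M i : Matrix (Fin k) (Fin (k + i - 1)) F)ᵀ (bcol j) = Mᵀ (φ (bcol j)) := by
      rw [hGM]; rfl
    rw [h, hφb j hj, hej j]
  have hrecB : ∀ (j b : Fin k), (b : ℕ) < i → b ≠ j →
      IsRecoverySet (Gmat M i : Matrix (Fin k) (Fin (k + i - 1)) F) j (insert (bcol b) P) := by
    intro j b hb hbj
    apply isRecoverySet_big' (by omega : 0 < k) M hMDS _ φ hφinj hGM j (hej j) _ (hRcard b hb)
    intro l hl hcontr
    rcases Finset.mem_insert.mp hl with rfl | hlP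
    · rw [hφb b hb] at hcontr
      apply hbj
      apply Fin.ext
      have := congrArg Fin.val hcontr
      simpa using this
    · have hil : i ≤ (l : ℕ) := (hmemP l).mp hlP
      have hv := congrArg Fin.val hcontr
      rw [hφval, if_neg (by omega)] at hv
      have hjlt := j.isLt
      simp only [Fin.coe_castAdd] at hv
      omega
  -- the allocation
  refine ⟨hlam0, ⟨fun j R =>
    (if (j : ℕ) < i ∧ R = {bcol j} then min (lam j) 1 else 0) +
      ∑ b ∈ Bfin, (if R = insert (bcol b) P then d j * (1 - lam b) / D else 0),
    ?_, ?_, ?_, ?_⟩⟩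
  · -- nonnegativity
    intro j R
    apply add_nonneg
    · split_ifs
      · exact le_min (hlam0 j) zero_le_one
      · exact le_refl 0
    · apply Finset.sum_nonneg
      intro b hb
      split_ifs
      · apply div_nonneg _ hD0
        apply mul_nonneg (hd0 j)
        have : lam b < 1 := ((hmemB b).mp hb).2
        linarith
      · exact le_refl 0
  · -- support on recovery sets
    intro j R hnot
    by_contra hw0
    apply hnot
    by_cases h1 : (j : ℕ) < i ∧ R = {bcol j}
    · rw [h1.2]
      exact hrecS j h1.1
    · simp only [if_neg h1, zero_add] at hw0
      obtain ⟨b, hbB, hb0⟩ := Finset.exists_ne_zero_of_sum_ne_zero hw0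
      have hbi : (b : ℕ) < i := ((hmemB b).mp hbB).1
      have hRb : R = insert (bcol b) P := by
        by_contra h
        rw [if_neg h] at hb0
        exact hb0 rfl
      have hdj : d j ≠ 0 := by
        intro h
        rw [if_pos hRb, h] at hb0
        simp at hb0
      have hbj : b ≠ j := by
        intro h
        subst h
        exact hdj (hdB b hbB)
      rw [hRb]
      exact hrecB j b hbi hbj
  · -- sums to lam
    intro j
    rw [Finset.sum_add_distrib]
    have h1 : (∑ R : Finset (Fin (k + i - 1)),
        (if (j : ℕ) < i ∧ R = {bcol j} then min (lam j) 1 else 0)) = sfun j := by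
      by_cases hj : (j : ℕ) < i
      · simp only [hj, true_and]
        rw [Finset.sum_ite_eq' Finset.univ ({bcol j} : Finset (Fin (k + i - 1)))
          (fun _ => min (lam j) 1), if_pos (Finset.mem_univ _)]
        simp [hsfun, hj]
      · simp [hj, hsfun]
    have h2 : (∑ R : Finset (Fin (k + i - 1)), ∑ b ∈ Bfin,
        (if R = insert (bcol b) P then d j * (1 - lam b) / D else 0)) = d j := by
      rw [Finset.sum_comm]
      have h : ∀ b ∈ Bfin, (∑ R : Finset (Fin (k + i - 1)),
          (if R = insert (bcol b) P then d j * (1 - lam b) / D else 0))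
          = d j * (1 - lam b) / D := by
        intro b _
        rw [Finset.sum_ite_eq' Finset.univ (insert (bcol b) P)
          (fun _ => d j * (1 - lam b) / D), if_pos (Finset.mem_univ _)]
      rw [Finset.sum_congr rfl h]
      rcases eq_or_ne D 0 with hDz | hDz
      · have hj0 : d j = 0 := hDzero hDz j
        rw [hj0]
        simp
      · exact hrowsum hDz j
    rw [h1, h2]
    simp only [hdd]
    ring
  · -- capacity
    intro l
    have hinner : ∀ j : Fin k, (∑ R ∈ Finset.univ.filter
          (fun R : Finset (Fin (k + i - 1)) => l ∈ R),
        ((if (j : ℕ) < i ∧ R = {bcol j} then min (lam j) 1 else 0) +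
          ∑ b ∈ Bfin, (if R = insert (bcol b) P then d j * (1 - lam b) / D else 0)))
        = (if (j : ℕ) < i ∧ l = bcol j then min (lam j) 1 else 0)
          + ∑ b ∈ Bfin, (if l ∈ insert (bcol b) P then d j * (1 - lam b) / D else 0) := by
      intro j
      rw [Finset.sum_add_distrib]
      congr 1
      · by_cases hj : (j : ℕ) < i
        · simp only [hj, true_and]
          rw [Finset.sum_ite_eq' _ ({bcol j} : Finset (Fin (k + i - 1)))
            (fun _ => min (lam j) 1)]
          simp [Finset.mem_filter]
        · simp [hj]
      · rw [Finset.sum_comm]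
        apply Finset.sum_congr rfl
        intro b _
        rw [Finset.sum_ite_eq' _ (insert (bcol b) P) (fun _ => d j * (1 - lam b) / D)]
        simp [Finset.mem_filter]
    rw [Finset.sum_congr rfl (fun j _ => hinner j), Finset.sum_add_distrib]
    by_cases hl : (l : ℕ) < i
    · -- systematic column
      set j0 : Fin k := ⟨(l : ℕ), by omega⟩ with hj0
      have hcond : ∀ j : Fin k, ((j : ℕ) < i ∧ l = bcol j) ↔ j = j0 := by
        intro j
        constructor
        · rintro ⟨hji, hlb⟩
          apply Fin.ext
          have h := congrArg Fin.val hlb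
          simp only [hbcol] at h
          simp only [hj0]
          omega
        · rintro rfl
          refine ⟨hl, Fin.ext ?_⟩
          simp [hbcol, hj0]
      have h1 : (∑ j : Fin k, (if (j : ℕ) < i ∧ l = bcol j then min (lam j) 1 else 0))
          = min (lam j0) 1 := by
        rw [Finset.sum_congr rfl (fun j _ => if_congr (hcond j) rfl rfl)]
        rw [Finset.sum_ite_eq' Finset.univ j0 (fun j => min (lam j) 1),
          if_pos (Finset.mem_univ _)]
      have hmem_ins : ∀ b ∈ Bfin, (l ∈ insert (bcol b) P ↔ b = j0) := by
        intro b hb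
        have hbi : (b : ℕ) < i := ((hmemB b).mp hb).1
        rw [Finset.mem_insert]
        constructor
        · rintro (hlb | hlP)
          · apply Fin.ext
            have h := congrArg Fin.val hlb
            simp only [hbcol] at h
            simp only [hj0]
            omega
          · exfalso
            have := (hmemP l).mp hlP
            omega
        · rintro rfl
          left
          apply Fin.ext
          simp [hbcol, hj0]
      have h2 : (∑ j : Fin k, ∑ b ∈ Bfin,
          (if l ∈ insert (bcol b) P then d j * (1 - lam b) / D else 0))
          = ∑ j : Fin k, (if j0 ∈ Bfin then d j * (1 - lam j0) / D else 0) := by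
        apply Finset.sum_congr rfl
        intro j _
        rw [Finset.sum_congr rfl (fun b hb => if_congr (hmem_ins b hb) rfl rfl)]
        exact Finset.sum_ite_eq' Bfin j0 (fun b => d j * (1 - lam b) / D)
      rw [h1, h2]
      by_cases hj0B : j0 ∈ Bfin
      · simp only [if_pos hj0B]
        have hlt : lam j0 < 1 := ((hmemB j0).mp hj0B).2
        rcases eq_or_ne D 0 with hDz | hDz
        · have hz : (∑ j : Fin k, d j * (1 - lam j0) / D) = 0 :=
            Finset.sum_eq_zero fun j _ => by rw [hDzero hDz j]; simp
          rw [hz, min_eq_left hlt.le]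
          linarith [hlam0 j0]
        · have hcalc : (∑ j : Fin k, d j * (1 - lam j0) / D) = 1 - lam j0 := by
            rw [← Finset.sum_div, ← Finset.sum_mul, ← hDD, mul_comm, mul_div_assoc,
              div_self hDz, mul_one]
          rw [hcalc, min_eq_left hlt.le]
          linarith
      · simp only [if_neg hj0B, Finset.sum_const_zero, add_zero]
        exact min_le_right _ _
    · -- parity column
      have h1 : (∑ j : Fin k, (if (j : ℕ) < i ∧ l = bcol j then min (lam j) 1 else 0)) = 0 := by
        apply Finset.sum_eq_zero
        intro j _
        rw [if_neg]
        rintro ⟨hji, hlb⟩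
        have h := congrArg Fin.val hlb
        simp only [hbcol] at h
        omega
      have hlP : l ∈ P := (hmemP l).mpr (by omega)
      have h2 : ∀ j : Fin k, ∀ b ∈ Bfin,
          (if l ∈ insert (bcol b) P then d j * (1 - lam b) / D else 0)
          = d j * (1 - lam b) / D := fun j b _ => if_pos (Finset.mem_insert_of_mem hlP)
      rw [h1, zero_add, Finset.sum_congr rfl (fun j _ => Finset.sum_congr rfl (h2 j))]
      rcases eq_or_ne D 0 with hDz | hDz
      · rw [Finset.sum_eq_zero]
        · norm_num
        · intro j _
          apply Finset.sum_eq_zero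
          intro b _
          rw [hDzero hDz j]
          simp
      · have hcalc : (∑ j : Fin k, ∑ b ∈ Bfin, d j * (1 - lam b) / D) = D := by
          rw [Finset.sum_congr rfl (fun j _ => hrowsum hDz j), ← hDD]
        rw [hcalc]
        exact hD1
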